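/- Let β be a quadratic Pisot unit, root of x² - ax - 1 with a ∈ Z_{>0}, and α = -β^{-1}. Every rational number q ∈ (-1, 1) has an eventually periodic weakly admissible α-adic expansion with no fractional part: there exist digits (x_i)_{i≥0} in {0,…,a}, eventually periodic to the left and weakly admissible, such that q = Σ_{i≥0} x_i α^i. -/

import Mathlib

/-- digit selection for the α-adic algorithm -/
noncomputable def adig (β z : ℝ) : ℤ := max 0 ⌈-β * z - β⁻¹⌉

/-- state sequence of the algorithm -/
noncomputable def azs (β : ℝ) (q : ℚ) : ℕ → ℝ
  | 0 => -(q : ℝ) * β⁻¹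
  | i + 1 => -β * azs β q i - adig β (azs β q i)

/-- integer coordinates of the state w.r.t. basis (1, β), scaled by q.den -/
noncomputable def aUV (β : ℝ) (a : ℕ) (q : ℚ) : ℕ → ℤ × ℤ
  | 0 => (q.num * a, -q.num)
  | i + 1 => (-(aUV β a q i).2 - q.den * adig β (azs β q i),
              -((aUV β a q i).1 + (a : ℤ) * (aUV β a q i).2))

section aux
variable {a : ℕ} {β α : ℝ} {q : ℚ}

lemma basic_facts (ha : 0 < a) (hβroot : β ^ 2 = a * β + 1) (hβpos : 0 < β) :
    1 < β ∧ (a : ℝ) < β ∧ β < a + 1 ∧ β⁻¹ = β - a := by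
  have ha1 : (1 : ℝ) ≤ a := by exact_mod_cast ha
  have hb1 : 1 < β := by nlinarith
  have hba : (a : ℝ) < β := by nlinarith
  have hc : β⁻¹ = β - a := by
    have h : β * (β - a) = 1 := by nlinarith
    exact inv_eq_of_mul_eq_one_right h
  have hblt : β < a + 1 := by
    have : β⁻¹ < 1 := by rw [inv_lt_one_iff₀]; right; exact hb1
    nlinarith [hc]
  exact ⟨hb1, hba, hblt, hc⟩

lemma adig_step (hβpos : 0 < β) (hc : β⁻¹ = β - a)
    {z : ℝ} (h1 : -1 ≤ z) (h2 : z ≤ β⁻¹) :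
    0 ≤ adig β z ∧ adig β z ≤ (a : ℤ) ∧
      -1 ≤ -β * z - adig β z ∧ -β * z - adig β z ≤ β⁻¹ ∧
      (adig β z ≠ 0 → β⁻¹ - 1 < -β * z - adig β z) := by
  have hβinv : β * β⁻¹ = 1 := mul_inv_cancel₀ (ne_of_gt hβpos)
  have hβinvpos : 0 < β⁻¹ := inv_pos.mpr hβpos
  have ht1 : -1 ≤ -β * z := by nlinarith
  have ht2 : -β * z ≤ β := by nlinarith
  unfold adig
  rcases le_or_gt ⌈-β * z - β⁻¹⌉ 0 with hm | hm
  · have hmax : max 0 ⌈-β * z - β⁻¹⌉ = 0 := max_eq_left hm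
    rw [hmax]
    have hle : -β * z - β⁻¹ ≤ ((0 : ℤ) : ℝ) := Int.ceil_le.mp hm
    push_cast at hle
    refine ⟨le_refl 0, by exact_mod_cast Nat.zero_le a, ?_, ?_, ?_⟩
    · push_cast; linarith
    · push_cast; linarith
    · intro h; exact absurd rfl h
  · have hmax : max 0 ⌈-β * z - β⁻¹⌉ = ⌈-β * z - β⁻¹⌉ := max_eq_right hm.le
    rw [hmax]
    set m := ⌈-β * z - β⁻¹⌉ with hmdef
    have hma : m ≤ (a : ℤ) := by
      apply Int.ceil_le.mpr
      push_cast
      nlinarith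
    have hub : -β * z - β⁻¹ ≤ (m : ℝ) := Int.le_ceil _
    have hlb : (m : ℝ) < -β * z - β⁻¹ + 1 := Int.ceil_lt_add_one _
    refine ⟨hm.le, hma, by linarith, by linarith, fun _ => by linarith⟩

lemma adig_ne_a (ha : 0 < a) (hβpos : 0 < β) (hc : β⁻¹ = β - a)
    {z : ℝ} (hz : β⁻¹ - 1 < z) : adig β z ≠ (a : ℤ) := by
  have hβinv : β * β⁻¹ = 1 := mul_inv_cancel₀ (ne_of_gt hβpos)
  have hlt : -β * z - β⁻¹ ≤ ((a : ℤ) : ℝ) - 1 := by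
    push_cast
    nlinarith
  have hceil : ⌈-β * z - β⁻¹⌉ ≤ (a : ℤ) - 1 := Int.ceil_le.mpr (by push_cast at hlt ⊢; linarith)
  have ha1 : (1 : ℤ) ≤ (a : ℤ) := by exact_mod_cast ha
  unfold adig
  intro h
  rcases max_cases (0 : ℤ) ⌈-β * z - β⁻¹⌉ with ⟨h1, _⟩ | ⟨h1, _⟩ <;> omega

lemma zrep (hβroot : β ^ 2 = (a : ℝ) * β + 1) (hc : β⁻¹ = β - a) :
    ∀ i, azs β q i = (((aUV β a q i).1 : ℝ) + ((aUV β a q i).2 : ℝ) * β) / q.den := by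
  have hden : ((q.den : ℝ)) ≠ 0 := by exact_mod_cast q.den_nz
  intro i
  induction i with
  | zero =>
      show -(q : ℝ) * β⁻¹ = (((q.num * a : ℤ) : ℝ) + ((-q.num : ℤ) : ℝ) * β) / q.den
      have hq : (q : ℝ) = (q.num : ℝ) / (q.den : ℝ) := by rw [Rat.cast_def]
      rw [hq, hc]
      push_cast
      field_simp
      ring
  | succ i ih =>
      show -β * azs β q i - adig β (azs β q i) = _
      set d := adig β (azs β q i) with hd
      rw [ih]
      show _ = ((((-(aUV β a q i).2 - q.den * d) : ℤ) : ℝ)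
          + (((-((aUV β a q i).1 + (a : ℤ) * (aUV β a q i).2)) : ℤ) : ℝ) * β) / q.den
      push_cast
      field_simp
      linear_combination (-(((aUV β a q i).2 : ℝ))) * hβroot

lemma Wrec (hβroot : β ^ 2 = (a : ℝ) * β + 1) (i : ℕ) :
    (((aUV β a q (i+1)).1 : ℝ) + ((aUV β a q (i+1)).2 : ℝ) * ((a : ℝ) - β)) / q.den
      = -((a : ℝ) - β) * ((((aUV β a q i).1 : ℝ) + ((aUV β a q i).2 : ℝ) * ((a : ℝ) - β)) / q.den)
        - adig β (azs β q i) := by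
  have hden : ((q.den : ℝ)) ≠ 0 := by exact_mod_cast q.den_nz
  show ((((-(aUV β a q i).2 - q.den * adig β (azs β q i)) : ℤ) : ℝ)
      + (((-((aUV β a q i).1 + (a : ℤ) * (aUV β a q i).2)) : ℤ) : ℝ) * ((a : ℝ) - β)) / q.den = _
  push_cast
  field_simp
  ring_nf
  linear_combination (((aUV β a q i).2 : ℝ)) * hβroot

lemma val (hαβ : α * β = -1) (N : ℕ) :
    azs β q 0 = (∑ i ∈ Finset.range N, (adig β (azs β q i) : ℝ) * α ^ (i+1))
      + α ^ N * azs β q N := by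
  induction N with
  | zero => simp
  | succ N ih =>
      rw [Finset.sum_range_succ]
      have hz : azs β q (N+1) = -β * azs β q N - adig β (azs β q N) := rfl
      rw [ih, hz]
      linear_combination (α ^ N * azs β q N) * hαβ

end aux

set_option maxHeartbeats 1600000 in
theorem rational_has_eventually_periodic_expansion (a : ℕ) (ha : 0 < a) (β α : ℝ)
    (hβroot : β ^ 2 = a * β + 1) (hβpos : 0 < β) (hα : α = -β⁻¹)
    (q : ℚ) (hq1 : -1 < q) (hq2 : q < 1) :
    ∃ x : ℕ → ℤ,
      (∀ i, 0 ≤ x i ∧ x i ≤ a) ∧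
      (∀ i, x (i + 1) = a → x i = 0) ∧
      (∃ N p : ℕ, 0 < p ∧ ∀ i, N ≤ i → x (i + p) = x i) ∧
      HasSum (fun i : ℕ => (x i : ℝ) * α ^ i) (q : ℝ) := by
  obtain ⟨hb1, hba, hblt, hc⟩ := basic_facts ha hβroot hβpos
  have hβinvpos : 0 < β⁻¹ := inv_pos.mpr hβpos
  have hβinvlt1 : β⁻¹ < 1 := by rw [inv_lt_one_iff₀]; right; exact hb1
  have hαβ : α * β = -1 := by
    rw [hα]; field_simp
  have hq1' : (-1 : ℝ) < (q : ℝ) := by exact_mod_cast hq1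
  have hq2' : ((q : ℝ)) < 1 := by exact_mod_cast hq2
  -- invariant
  have hinv : ∀ i, -1 ≤ azs β q i ∧ azs β q i ≤ β⁻¹ := by
    intro i
    induction i with
    | zero =>
        constructor
        · show -1 ≤ -(q : ℝ) * β⁻¹
          nlinarith
        · show -(q : ℝ) * β⁻¹ ≤ β⁻¹
          nlinarith
    | succ i ih =>
        have h := adig_step hβpos hc ih.1 ih.2
        exact ⟨h.2.2.1, h.2.2.2.1⟩
  have hdig : ∀ i, 0 ≤ adig β (azs β q i) ∧ adig β (azs β q i) ≤ (a : ℤ) := by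
    intro i
    have h := adig_step hβpos hc (hinv i).1 (hinv i).2
    exact ⟨h.1, h.2.1⟩
  refine ⟨fun i => adig β (azs β q i), hdig, ?_, ?_, ?_⟩
  · -- weak admissibility
    intro i hxa
    by_contra hne
    have h := (adig_step hβpos hc (hinv i).1 (hinv i).2).2.2.2.2 hne
    have hz1 : azs β q (i+1) = -β * azs β q i - adig β (azs β q i) := rfl
    rw [← hz1] at h
    exact adig_ne_a ha hβpos hc h hxa
  · -- eventual periodicity
    set u : ℕ → ℤ := fun i => (aUV β a q i).1 with hu
    set v : ℕ → ℤ := fun i => (aUV β a q i).2 with hv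
    set W : ℕ → ℝ := fun i => ((u i : ℝ) + (v i : ℝ) * ((a : ℝ) - β)) / q.den with hW
    have hden0 : (0 : ℝ) < (q.den : ℝ) := by exact_mod_cast q.pos
    have hden1 : (1 : ℝ) ≤ (q.den : ℝ) := by exact_mod_cast q.pos
    set ε : ℝ := (a : ℝ) + 1 - β with hε
    have hεpos : 0 < ε := by simp only [hε]; linarith
    set C : ℝ := ((a : ℝ) + β) / ε with hCdef
    have hapos : (0 : ℝ) < a := by exact_mod_cast ha
    have hCpos : 0 < C := div_pos (by linarith) hεpos
    have hCε : C * ε = (a : ℝ) + β := div_mul_cancel₀ _ (ne_of_gt hεpos)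
    have hεinv : ε = 1 - β⁻¹ := by rw [hε, hc]; ring
    have hCβ : β ≤ C := by nlinarith
    -- conjugate bound
    have hWb : ∀ i, -C ≤ W i ∧ W i ≤ C := by
      intro i
      induction i with
      | zero =>
          have hW0 : W 0 = (q : ℝ) * β := by
            show (((q.num * a : ℤ) : ℝ) + ((-q.num : ℤ) : ℝ) * ((a : ℝ) - β)) / q.den = _
            have hq : (q : ℝ) = (q.num : ℝ) / (q.den : ℝ) := by rw [Rat.cast_def]
            rw [hq]
            push_cast
            field_simp
            ring
          rw [hW0]
          constructor <;> nlinarith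
      | succ i ih =>
          have hrec : W (i+1) = -((a : ℝ) - β) * W i - adig β (azs β q i) := Wrec hβroot i
          have hd := hdig i
          have hd0 : (0 : ℝ) ≤ (adig β (azs β q i) : ℝ) := by exact_mod_cast hd.1
          have hda : ((adig β (azs β q i)) : ℝ) ≤ (a : ℝ) := by exact_mod_cast hd.2
          have hsub : -((a : ℝ) - β) = β⁻¹ := by rw [hc]; ring
          rw [hrec, hsub]
          have hmu : β⁻¹ * W i ≤ β⁻¹ * C := mul_le_mul_of_nonneg_left ih.2 hβinvpos.le
          have hml : β⁻¹ * -C ≤ β⁻¹ * W i := mul_le_mul_of_nonneg_left ih.1 hβinvpos.le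
          have hCe : C * (1 - β⁻¹) = (a : ℝ) + β := by rw [← hεinv]; exact hCε
          constructor <;> nlinarith
    -- bounds on u, v
    have hzrep := zrep (a := a) (q := q) hβroot hc
    have hvW : ∀ i, (v i : ℝ) * (2 * β - (a : ℝ)) = q.den * (azs β q i - W i) := by
      intro i
      rw [hzrep i, hW]
      field_simp
      ring
    have h2βa : 1 < 2 * β - (a : ℝ) := by linarith
    set B : ℝ := (q.den : ℝ) * (1 + C) with hB
    have hBpos : 0 < B := by rw [hB]; positivity
    have hvb : ∀ i, -B ≤ (v i : ℝ) ∧ (v i : ℝ) ≤ B := by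
      intro i
      have h := hvW i
      have h1 := (hinv i).1
      have h2 : azs β q i ≤ 1 := le_trans (hinv i).2 hβinvlt1.le
      have hw := hWb i
      have hup : azs β q i - W i ≤ 1 + C := by linarith [hw.1]
      have hlo : -(1 + C) ≤ azs β q i - W i := by linarith [hw.2]
      have hup' : (q.den : ℝ) * (azs β q i - W i) ≤ B := by
        rw [hB]; exact mul_le_mul_of_nonneg_left hup hden0.le
      have hlo' : -B ≤ (q.den : ℝ) * (azs β q i - W i) := by
        rw [hB]
        have := mul_le_mul_of_nonneg_left hlo hden0.le
        linarith [this]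
      rcases le_or_gt 0 ((v i : ℝ)) with hv0 | hv0
      · have : (v i : ℝ) * 1 ≤ (v i : ℝ) * (2 * β - (a : ℝ)) :=
          mul_le_mul_of_nonneg_left h2βa.le hv0
        constructor <;> nlinarith
      · have : (v i : ℝ) * (2 * β - (a : ℝ)) ≤ (v i : ℝ) * 1 := by
          apply mul_le_mul_of_nonpos_left h2βa.le hv0.le
        constructor <;> nlinarith
    set Mr : ℝ := (q.den : ℝ) * (1 + C) * (1 + β) with hMr
    have hub : ∀ i, -Mr ≤ (u i : ℝ) ∧ (u i : ℝ) ≤ Mr := by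
      intro i
      have h : (u i : ℝ) = (q.den : ℝ) * azs β q i - (v i : ℝ) * β := by
        rw [hzrep i]
        field_simp
        simp only [hu, hv]; ring
      have h1 := (hinv i).1
      have h2 : azs β q i ≤ 1 := le_trans (hinv i).2 hβinvlt1.le
      have hv' := hvb i
      have hza : (q.den : ℝ) * azs β q i ≤ (q.den : ℝ) := by
        have := mul_le_mul_of_nonneg_left h2 hden0.le
        linarith
      have hzb : -(q.den : ℝ) ≤ (q.den : ℝ) * azs β q i := by
        have := mul_le_mul_of_nonneg_left h1 hden0.le
        linarith
      have hva : (v i : ℝ) * β ≤ B * β := mul_le_mul_of_nonneg_right hv'.2 hβpos.le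
      have hvb2 : -(B * β) ≤ (v i : ℝ) * β := by
        have := mul_le_mul_of_nonneg_right hv'.1 hβpos.le
        linarith
      have hnB : (q.den : ℝ) ≤ B := by
        rw [hB]
        have h3 : (0:ℝ) ≤ (q.den : ℝ) * C := mul_nonneg hden0.le hCpos.le
        nlinarith
      have hMreq : Mr = B + B * β := by rw [hMr, hB]; ring
      constructor <;> nlinarith
    set M : ℤ := ⌈Mr⌉ with hM
    have hMr_le : Mr ≤ (M : ℝ) := Int.le_ceil Mr
    have hBM : B ≤ Mr := by
      have h4 : B * (1 + β) = Mr := by rw [hB, hMr]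
      nlinarith
    have hmem : ∀ i, aUV β a q i ∈ Finset.Icc (-M) M ×ˢ Finset.Icc (-M) M := by
      intro i
      rw [Finset.mem_product, Finset.mem_Icc, Finset.mem_Icc]
      have h1 := hub i
      have h2 := hvb i
      refine ⟨⟨?_, ?_⟩, ?_, ?_⟩ <;> rw [← Int.cast_le (R := ℝ)] <;> push_cast <;> linarith
    set S : Finset (ℤ × ℤ) := Finset.Icc (-M) M ×ˢ Finset.Icc (-M) M with hSdef
    obtain ⟨i, hi, j, hj, hne, heq⟩ :=
      Finset.exists_ne_map_eq_of_card_lt_of_maps_to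
        (s := Finset.range (S.card + 1)) (t := S)
        (by simp) (fun i _ => hmem i)
    obtain ⟨i0, j0, hlt, he⟩ : ∃ i0 j0, i0 < j0 ∧ aUV β a q i0 = aUV β a q j0 := by
      rcases lt_or_gt_of_ne hne with h | h
      exacts [⟨i, j, h, heq⟩, ⟨j, i, h, heq.symm⟩]
    have hzeq : azs β q i0 = azs β q j0 := by
      rw [hzrep i0, hzrep j0, he]
    have hshift : ∀ k, azs β q (i0 + k) = azs β q (j0 + k) := by
      intro k
      induction k with
      | zero => simpa using hzeq
      | succ k ih =>
          have e1 : azs β q (i0 + (k+1)) = -β * azs β q (i0 + k) - adig β (azs β q (i0 + k)) := rfl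
          have e2 : azs β q (j0 + (k+1)) = -β * azs β q (j0 + k) - adig β (azs β q (j0 + k)) := rfl
          rw [e1, e2, ih]
    refine ⟨i0, j0 - i0, by omega, ?_⟩
    intro m hm
    obtain ⟨k, rfl⟩ := Nat.exists_eq_add_of_le hm
    have hidx : i0 + k + (j0 - i0) = j0 + k := by omega
    show adig β (azs β q (i0 + k + (j0 - i0))) = adig β (azs β q (i0 + k))
    rw [hidx, ← hshift k]
  · -- HasSum
    have hz0 : azs β q 0 = (q : ℝ) * α := by
      show -(q : ℝ) * β⁻¹ = (q : ℝ) * α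
      rw [hα]; ring
    have hαabs : |α| = β⁻¹ := by
      rw [hα, abs_neg, abs_of_pos hβinvpos]
    have hαabslt : |α| < 1 := by rw [hαabs]; exact hβinvlt1
    set f : ℕ → ℝ := fun i => ((adig β (azs β q i) : ℝ)) * α ^ i with hf
    have hkey : ∀ N, (q : ℝ) - ∑ i ∈ Finset.range N, f i = α ^ N * azs β q N * (-β) := by
      intro N
      have h := val (q := q) hαβ N
      rw [hz0] at h
      have hSig : ∑ i ∈ Finset.range N, (adig β (azs β q i) : ℝ) * α ^ (i+1)
          = α * ∑ i ∈ Finset.range N, f i := by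
        rw [Finset.mul_sum]
        apply Finset.sum_congr rfl
        intro i _
        rw [hf]
        ring
      rw [hSig] at h
      linear_combination (-β) * h + ((q : ℝ) - ∑ i ∈ Finset.range N, f i) * hαβ
    have hbound : ∀ N, ‖(q : ℝ) - ∑ i ∈ Finset.range N, f i‖ ≤ β * |α| ^ N := by
      intro N
      rw [hkey N, Real.norm_eq_abs, abs_mul, abs_mul, abs_neg, abs_of_pos hβpos, abs_pow]
      have hz1 : |azs β q N| ≤ 1 := by
        rw [abs_le]
        exact ⟨(hinv N).1, le_trans (hinv N).2 hβinvlt1.le⟩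
      have : |α| ^ N * |azs β q N| ≤ |α| ^ N * 1 := by
        apply mul_le_mul_of_nonneg_left hz1 (pow_nonneg (abs_nonneg α) N)
      nlinarith [pow_nonneg (abs_nonneg α) N]
    have hg0 : Filter.Tendsto (fun N : ℕ => β * |α| ^ N) Filter.atTop (nhds 0) := by
      have := (tendsto_pow_atTop_nhds_zero_of_lt_one (abs_nonneg α) hαabslt).const_mul β
      simpa using this
    have hdiff : Filter.Tendsto (fun N => (q : ℝ) - ∑ i ∈ Finset.range N, f i)
        Filter.atTop (nhds 0) := squeeze_zero_norm hbound hg0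
    have hten : Filter.Tendsto (fun N => ∑ i ∈ Finset.range N, f i)
        Filter.atTop (nhds (q : ℝ)) := by
      have := (tendsto_const_nhds (x := (q : ℝ)) (f := Filter.atTop (α := ℕ))).sub hdiff
      simpa using this
    have hsummable : Summable f := by
      apply Summable.of_norm_bounded
        ((summable_geometric_of_lt_one (abs_nonneg α) hαabslt).mul_left (a : ℝ))
      intro i
      rw [hf, Real.norm_eq_abs, abs_mul, abs_pow]
      have h1 : |(adig β (azs β q i) : ℝ)| ≤ (a : ℝ) := by
        rw [abs_of_nonneg (by exact_mod_cast (hdig i).1)]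
        exact_mod_cast (hdig i).2
      apply mul_le_mul_of_nonneg_right h1 (pow_nonneg (abs_nonneg α) i)
    have h1 := hsummable.hasSum
    rwa [tendsto_nhds_unique h1.tendsto_sum_nat hten] at h1
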